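/- Let B be the n×n matrix with first n−1 rows given by the central difference stencil (B_{j,j−1} = −1/2, B_{j,j+1} = 1/2, B_{j,j} = 0) and last row (0,…,0, 1/2, −2, 3/2). Then λ ∈ ℂ is an eigenvalue of B if and only if λ = i·x where x is a root of U_{n−1}(x) + i U_{n−2}(x) − i T_n(x) + T_{n−1}(x) = 0; moreover the eigenvector for λ = i·x is (i^0 U_0(x), i^1 U_1(x), …, i^{n−1} U_{n−1}(x))^T. -/
import Mathlib

open Matrix Polynomial Polynomial.Chebyshev Complex

lemma sum_if_single' {n : ℕ} (P : Fin n → ℂ) (c : ℂ) (a : ℕ) (ha : a < n) :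
    (∑ j : Fin n, (if (j : ℕ) = a then c else 0) * P j) = c * P ⟨a, ha⟩ := by
  rw [Finset.sum_eq_single (⟨a, ha⟩ : Fin n)]
  · simp
  · intro b _ hb
    have : (b : ℕ) ≠ a := fun h => hb (Fin.ext h)
    simp [this]
  · simp

lemma Qrec' (x : ℂ) (j : ℕ) :
    I^(j+2) * ((U ℂ ((j+2 : ℕ) : ℤ)).eval x)
      = 2*(I*x) * (I^(j+1) * ((U ℂ ((j+1:ℕ):ℤ)).eval x)) + I^j * ((U ℂ (j : ℤ)).eval x) := by
  have h2 : ((j+2:ℕ):ℤ) = (j:ℤ)+2 := by push_cast; ring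
  have h1 : ((j+1:ℕ):ℤ) = (j:ℤ)+1 := by push_cast; ring
  rw [h2, h1, U_add_two]
  simp only [eval_sub, eval_mul, eval_ofNat, eval_X]
  linear_combination (-(I^j * ((U ℂ (j:ℤ)).eval x))) * Complex.I_sq

lemma core' (m : ℕ) (x : ℂ) :
    (1/2) * (I^m * ((U ℂ (m:ℤ)).eval x)) + (-2) * (I^(m+1) * ((U ℂ ((m+1:ℕ):ℤ)).eval x))
      + (3/2) * (I^(m+2) * ((U ℂ ((m+2:ℕ):ℤ)).eval x))
      - (I*x) * (I^(m+2) * ((U ℂ ((m+2:ℕ):ℤ)).eval x))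
    = -(I^m) * ((U ℂ ((m:ℤ)+2)).eval x + I * ((U ℂ ((m:ℤ)+1)).eval x)
        - I * ((T ℂ ((m:ℤ)+3)).eval x) + (T ℂ ((m:ℤ)+2)).eval x) := by
  have h2 : ((m+2:ℕ):ℤ) = (m:ℤ)+2 := by push_cast; ring
  have h1 : ((m+1:ℕ):ℤ) = (m:ℤ)+1 := by push_cast; ring
  rw [h2, h1]
  have hT3 := T_eq_U_sub_X_mul_U ℂ ((m:ℤ)+3)
  rw [show (m:ℤ)+3-1 = (m:ℤ)+2 by ring] at hT3
  have hT2 := T_eq_U_sub_X_mul_U ℂ ((m:ℤ)+2)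
  rw [show (m:ℤ)+2-1 = (m:ℤ)+1 by ring] at hT2
  have hU3 := U_add_two ℂ ((m:ℤ)+1)
  rw [show (m:ℤ)+1+2 = (m:ℤ)+3 by ring, show (m:ℤ)+1+1 = (m:ℤ)+2 by ring] at hU3
  have hU2 := U_add_two ℂ (m:ℤ)
  rw [hT3, hT2, hU3, hU2]
  simp only [eval_sub, eval_mul, eval_ofNat, eval_X, eval_add]
  linear_combination (I^m * (((U ℂ (m:ℤ)).eval x)*(x*I - 3/2) + ((U ℂ ((m:ℤ)+1)).eval x)*(3*x - 2*x^2*I))) * Complex.I_sq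

set_option maxHeartbeats 1000000 in

/-- `λ` is an eigenvalue of the hybrid central-difference/BDF2 matrix `B` iff `λ = i x`
for a root `x` of `U_{n-1}(x) + i U_{n-2}(x) - i T_n(x) + T_{n-1}(x) = 0`; moreover the
eigenvector for `λ = i x` is `(i^0 U_0(x), …, i^{n-1} U_{n-1}(x))`. -/
theorem eigen_of_B (n : ℕ) (hn : 3 ≤ n)
    (B : Matrix (Fin n) (Fin n) ℂ)
    (hB : B = Matrix.of fun i j : Fin n =>
      if (i : ℕ) < n - 1 then
        (if (j : ℕ) = (i : ℕ) + 1 then 1 / 2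
         else if (j : ℕ) + 1 = (i : ℕ) then -(1 / 2) else 0)
      else
        (if (j : ℕ) = n - 3 then 1 / 2
         else if (j : ℕ) = n - 2 then -2
         else if (j : ℕ) = n - 1 then 3 / 2 else 0)) :
    (∀ lam : ℂ,
      (∃ P : Fin n → ℂ, P ≠ 0 ∧ B.mulVec P = lam • P) ↔
      (∃ x : ℂ, (U ℂ ((n : ℤ) - 1)).eval x + I * (U ℂ ((n : ℤ) - 2)).eval x
          - I * (T ℂ n).eval x + (T ℂ ((n : ℤ) - 1)).eval x = 0 ∧ lam = I * x)) ∧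
    (∀ x : ℂ, (U ℂ ((n : ℤ) - 1)).eval x + I * (U ℂ ((n : ℤ) - 2)).eval x
          - I * (T ℂ n).eval x + (T ℂ ((n : ℤ) - 1)).eval x = 0 →
      B.mulVec (fun k : Fin n => I ^ (k : ℕ) * (U ℂ (k : ℕ)).eval x)
        = (I * x) • (fun k : Fin n => I ^ (k : ℕ) * (U ℂ (k : ℕ)).eval x)) := by
  obtain ⟨m, rfl⟩ : ∃ m, n = m + 3 := ⟨n - 3, by omega⟩
  -- cast normalizations
  have c1 : ((m+3:ℕ):ℤ) - 1 = (m:ℤ)+2 := by push_cast; ring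
  have c2 : ((m+3:ℕ):ℤ) - 2 = (m:ℤ)+1 := by push_cast; ring
  have c3 : ((m+3:ℕ):ℤ) = (m:ℤ)+3 := by push_cast; ring
  -- row computations
  have row0 : ∀ P : Fin (m+3) → ℂ, B.mulVec P ⟨0, by omega⟩ = (1/2) * P ⟨1, by omega⟩ := by
    intro P
    have h : B.mulVec P ⟨0, by omega⟩
        = ∑ j : Fin (m+3), (if (j:ℕ) = 1 then (1/2:ℂ) else 0) * P j := by
      rw [hB]
      simp only [Matrix.mulVec, dotProduct, Matrix.of_apply]
      refine Finset.sum_congr rfl fun j _ => ?_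
      split_ifs <;> first | rfl | (exfalso; first | assumption | omega) | norm_num
    rw [h, sum_if_single']
  have rowmid : ∀ (P : Fin (m+3) → ℂ) (i : ℕ) (h1 : 1 ≤ i) (h2 : i < m+2),
      B.mulVec P ⟨i, by omega⟩
        = (1/2) * P ⟨i+1, by omega⟩ + (-(1/2)) * P ⟨i-1, by omega⟩ := by
    intro P i h1 h2
    have h : B.mulVec P ⟨i, by omega⟩ = ∑ j : Fin (m+3),
        ((if (j:ℕ) = i+1 then (1/2:ℂ) else 0) * P j
          + (if (j:ℕ) = i-1 then (-(1/2):ℂ) else 0) * P j) := by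
      rw [hB]
      simp only [Matrix.mulVec, dotProduct, Matrix.of_apply]
      refine Finset.sum_congr rfl fun j _ => ?_
      rw [← add_mul]
      congr 1
      split_ifs <;> first | rfl | (exfalso; first | assumption | omega) | norm_num
    rw [h, Finset.sum_add_distrib, sum_if_single' P _ _ (by omega),
      sum_if_single' P _ _ (by omega)]
  have rowlast : ∀ P : Fin (m+3) → ℂ, B.mulVec P ⟨m+2, by omega⟩
      = (1/2) * P ⟨m, by omega⟩ + (-2) * P ⟨m+1, by omega⟩ + (3/2) * P ⟨m+2, by omega⟩ := by
    intro P
    have h : B.mulVec P ⟨m+2, by omega⟩ = ∑ j : Fin (m+3),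
        ((if (j:ℕ) = m then (1/2:ℂ) else 0) * P j
          + (if (j:ℕ) = m+1 then (-2:ℂ) else 0) * P j
          + (if (j:ℕ) = m+2 then (3/2:ℂ) else 0) * P j) := by
      rw [hB]
      simp only [Matrix.mulVec, dotProduct, Matrix.of_apply]
      refine Finset.sum_congr rfl fun j _ => ?_
      rw [← add_mul, ← add_mul]
      congr 1
      split_ifs <;> first | rfl | (exfalso; first | assumption | omega) | norm_num
    rw [h]
    rw [Finset.sum_add_distrib, Finset.sum_add_distrib,
      sum_if_single' P _ _ (by omega), sum_if_single' P _ _ (by omega),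
      sum_if_single' P _ _ (by omega)]
  -- key: the candidate vector is an eigenvector when x is a root
  have key2 : ∀ x : ℂ,
      (U ℂ ((↑(m+3) : ℤ) - 1)).eval x + I * (U ℂ ((↑(m+3) : ℤ) - 2)).eval x
          - I * (T ℂ ↑(m+3)).eval x + (T ℂ ((↑(m+3) : ℤ) - 1)).eval x = 0 →
      B.mulVec (fun k : Fin (m+3) => I ^ (k : ℕ) * (U ℂ (k : ℕ)).eval x)
        = (I * x) • (fun k : Fin (m+3) => I ^ (k : ℕ) * (U ℂ (k : ℕ)).eval x) := by
    intro x hx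
    rw [c1, c2, c3] at hx
    funext k
    obtain ⟨k, hk⟩ := k
    simp only [Pi.smul_apply, smul_eq_mul]
    rcases eq_or_ne k 0 with rfl | hk0
    · rw [row0]
      show (1/2) * (I ^ (1:ℕ) * (U ℂ ((1:ℕ):ℤ)).eval x)
        = (I * x) * (I ^ (0:ℕ) * (U ℂ ((0:ℕ):ℤ)).eval x)
      simp only [Nat.cast_one, Nat.cast_zero, U_one, U_zero, eval_mul, eval_ofNat,
        eval_X, eval_one, pow_one, pow_zero, mul_one]
      ring
    rcases eq_or_ne k (m+2) with rfl | hk2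
    · rw [rowlast]
      have hc := core' m x
      show (1/2) * (I ^ m * (U ℂ ((m:ℕ):ℤ)).eval x)
          + (-2) * (I ^ (m+1) * (U ℂ ((m+1:ℕ):ℤ)).eval x)
          + (3/2) * (I ^ (m+2) * (U ℂ ((m+2:ℕ):ℤ)).eval x)
        = (I * x) * (I ^ (m+2) * (U ℂ ((m+2:ℕ):ℤ)).eval x)
      linear_combination hc - I^m * hx
    · obtain ⟨j, rfl⟩ : ∃ j, k = j+1 := ⟨k-1, by omega⟩
      rw [rowmid _ (j+1) (by omega) (by omega)]
      show (1/2) * (I ^ (j+2) * (U ℂ ((j+2:ℕ):ℤ)).eval x)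
          + (-(1/2)) * (I ^ j * (U ℂ ((j:ℕ):ℤ)).eval x)
        = (I * x) * (I ^ (j+1) * (U ℂ ((j+1:ℕ):ℤ)).eval x)
      linear_combination (1/2) * Qrec' x j
  refine ⟨fun lam => ⟨?_, ?_⟩, key2⟩
  · rintro ⟨P, hP0, hPe⟩
    set x : ℂ := -I * lam with hxdef
    have hlam : lam = I * x := by
      rw [hxdef, show I * (-I * lam) = -(I*I) * lam by ring, Complex.I_mul_I]; ring
    have hP : ∀ k, ∀ hk : k < m+3,
        P ⟨k, hk⟩ = P ⟨0, by omega⟩ * (I^k * (U ℂ (k:ℤ)).eval x) := by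
      intro k
      induction k using Nat.strong_induction_on with
      | _ k ih =>
        intro hk
        match k, hk with
        | 0, hk => simp [U_zero]
        | 1, hk =>
          have h0 := congrFun hPe ⟨0, by omega⟩
          rw [row0] at h0
          simp only [Pi.smul_apply, smul_eq_mul] at h0
          rw [hlam] at h0
          have e1 : (U ℂ ((1:ℕ):ℤ)).eval x = 2 * x := by norm_num [U_one]
          rw [e1]
          linear_combination 2 * h0
        | (j+2), hk =>
          have h := congrFun hPe ⟨j+1, by omega⟩
          rw [rowmid P (j+1) (by omega) (by omega)] at h
          simp only [Pi.smul_apply, smul_eq_mul] at h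
          simp only [show j+1-1 = j from rfl, show j+1+1 = j+2 from rfl] at h
          rw [ih (j+1) (by omega) (by omega), ih j (by omega) (by omega), hlam] at h
          have hq := Qrec' x j
          linear_combination 2 * h - P ⟨0, by omega⟩ * hq
    have hP0ne : P ⟨0, by omega⟩ ≠ 0 := by
      intro h0
      apply hP0
      funext k
      have hv := hP k.1 k.2
      rw [h0, zero_mul] at hv
      simpa using hv
    refine ⟨x, ?_, hlam⟩
    rw [c1, c2, c3]
    have h := congrFun hPe ⟨m+2, by omega⟩
    rw [rowlast] at h
    simp only [Pi.smul_apply, smul_eq_mul] at h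
    rw [hP m (by omega), hP (m+1) (by omega), hP (m+2) (by omega), hlam] at h
    have hc := core' m x
    have h2 : P ⟨0, by omega⟩ * (-(I^m) * ((U ℂ ((m:ℤ)+2)).eval x
        + I * ((U ℂ ((m:ℤ)+1)).eval x) - I * ((T ℂ ((m:ℤ)+3)).eval x)
        + (T ℂ ((m:ℤ)+2)).eval x)) = 0 := by
      rw [← hc]; linear_combination h
    rcases mul_eq_zero.mp h2 with h' | h'
    · exact absurd h' hP0ne
    rcases mul_eq_zero.mp h' with h'' | h''
    · exact absurd h'' (neg_ne_zero.mpr (pow_ne_zero _ I_ne_zero))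
    · exact h''
  · rintro ⟨x, hx, rfl⟩
    refine ⟨fun k : Fin (m+3) => I ^ (k : ℕ) * (U ℂ (k : ℕ)).eval x, ?_, key2 x hx⟩
    intro hz
    have h0 := congrFun hz ⟨0, by omega⟩
    simp [U_zero] at h0
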